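/- Let R be a commutative ring with unit, b ∈ R, and m a positive integer. Let T_{b+1,b} be the symmetric Toeplitz matrix of order 2m whose diagonal entries are zero, whose entries on the subdiagonal and superdiagonal equal b+1, and all of whose other off-diagonal entries equal b. Then Hf(T_{b+1,b}) = y_m(b), the value at b of the Bessel polynomial of degree m. -/

import Mathlib

/-- The hafnian of a matrix over a linearly ordered finite index type:
the sum over all fixed-point-free involutions `σ` of the product of the
entries `A i (σ i)`, taken over one representative `i < σ i` of each orbit. -/
def hafnian {ι : Type*} [Fintype ι] [LinearOrder ι] {R : Type*} [CommSemiring R]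
    (A : Matrix ι ι R) : R :=
  ∑ σ ∈ Finset.univ.filter
      (fun σ : Equiv.Perm ι => σ * σ = 1 ∧ ∀ i, σ i ≠ i),
    ∏ i ∈ Finset.univ.filter (fun i => i < σ i), A i (σ i)

/-- The Toeplitz matrix `T_{a,b}` of order `n`: zero diagonal, entries `a` on the
sub- and superdiagonal, and entries `b` elsewhere. -/
def toeplitzAB {R : Type*} (n : ℕ) (a b : R) [Zero R] : Matrix (Fin n) (Fin n) R :=
  fun i j =>
    if i = j then 0
    else if (i : ℕ) + 1 = (j : ℕ) ∨ (j : ℕ) + 1 = (i : ℕ) then a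
    else b

/-- The Bessel polynomial of degree `m` evaluated at `b` in a commutative ring:
`y_m(b) = Σ_{k=0}^{m} ((m+k)!/(k!·(m-k)!·2^k)) · b^k`, the coefficients being the
integers `(m+k)!/(k!·(m-k)!·2^k)`. -/
def besselPoly {R : Type*} [CommSemiring R] (m : ℕ) (b : R) : R :=
  ∑ k ∈ Finset.range (m + 1),
    ((Nat.factorial (m + k) /
      (Nat.factorial k * Nat.factorial (m - k) * 2 ^ k) : ℕ) : R) * b ^ k

open Finset Equiv

def df : ℕ → ℕ
  | 0 => 1
  | t+1 => (2*t+1) * df t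

variable {N : ℕ}

def Inn (s : Finset (Fin N)) : Finset (Perm (Fin N)) :=
  univ.filter fun π => π * π = 1 ∧ ∀ i, i ∉ s → π i = i

lemma mem_Inn {s : Finset (Fin N)} {π : Perm (Fin N)} :
    π ∈ Inn s ↔ π * π = 1 ∧ ∀ i, i ∉ s → π i = i := by
  simp [Inn]

lemma invol_apply {π : Perm (Fin N)} (h : π * π = 1) (i : Fin N) : π (π i) = i := by
  have := congrArg (fun σ : Perm (Fin N) => σ i) h
  simpa [Perm.mul_apply] using this

lemma invol_iff {π : Perm (Fin N)} : π * π = 1 ↔ ∀ i, π (π i) = i := by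
  constructor
  · exact invol_apply
  · intro h; ext i; simp [Perm.mul_apply, h i]

def jj (π : Perm (Fin N)) : ℕ := (univ.filter fun i => i < π i).card

/-- value of `π * swap a x` -/
lemma mulswap_apply (π : Perm (Fin N)) (a x y : Fin N) :
    (π * swap a x) y = if y = a then π x else if y = x then π a else π y := by
  by_cases h1 : y = a
  · simp [h1, Perm.mul_apply]
  by_cases h2 : y = x
  · subst h2; simp [Perm.mul_apply, swap_apply_right, h1]
  · simp [h1, h2, Perm.mul_apply, swap_apply_of_ne_of_ne]

lemma L1 {R : Type*} [AddCommMonoid R] (s : Finset (Fin N)) (a : Fin N) (ha : a ∈ s)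
    (F : Perm (Fin N) → R) :
    ∑ π ∈ (Inn s).filter (fun π => π a ≠ a), F π
      = ∑ x ∈ s.erase a, ∑ τ ∈ Inn ((s.erase a).erase x), F (τ * swap a x) := by
  rw [Finset.sum_sigma']
  refine Finset.sum_nbij' (i := fun π => (⟨π a, π * swap a (π a)⟩ : Σ _ : Fin N, Perm (Fin N)))
    (j := fun p => p.2 * swap a p.1) ?_ ?_ ?_ ?_ ?_
  · rintro π hπ
    rw [mem_filter, mem_Inn] at hπ
    obtain ⟨⟨h1, h2⟩, h3⟩ := hπ
    have hπa : π a ∈ s := by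
      by_contra hc
      exact h3 ((by simpa [invol_apply h1 a] using h2 (π a) hc) : a = π a).symm
    simp only [mem_sigma, mem_erase]
    refine ⟨⟨h3, hπa⟩, ?_⟩
    rw [mem_Inn]
    constructor
    · rw [invol_iff]
      intro y
      rw [mulswap_apply, mulswap_apply]
      by_cases hy : y = a
      · simp [hy, invol_apply h1, h3]
      by_cases hy2 : y = π a
      · simp [hy, hy2, h3, Ne.symm h3]
      · have g1 : π y ≠ a := fun hc => hy2 (by rw [← hc, invol_apply h1])
        have g2 : π y ≠ π a := fun hc => hy (π.injective hc)
        simp [hy, hy2, g1, g2, invol_apply h1]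
    · intro i hi
      simp only [mem_erase, not_and_or, not_not, not_ne_iff] at hi
      rw [mulswap_apply]
      rcases hi with hi | hi | hi
      · -- i = π a
        rw [hi, if_neg h3, if_pos rfl]
      · -- i = a
        subst hi; rw [if_pos rfl, invol_apply h1]
      · -- i ∉ s
        have g0 : i ≠ a := fun hc => (hc ▸ hi) ha
        have g1 : i ≠ π a := fun hc => g0 (by
          have h5 : π i = π (π a) := congrArg π hc
          rw [invol_apply h1, h2 i hi] at h5; exact h5)
        simp [g0, g1, h2 i hi]
  · rintro ⟨x, τ⟩ hp
    simp only [mem_sigma, mem_erase] at hp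
    obtain ⟨⟨hxa, hxs⟩, hτ⟩ := hp
    rw [mem_Inn] at hτ
    obtain ⟨h1, h2⟩ := hτ
    have hτa : τ a = a := h2 a (by simp)
    have hτx : τ x = x := h2 x (by simp)
    simp only [mem_filter, mem_Inn]
    have happ : ∀ y, (τ * swap a x) y = if y = a then x else if y = x then a else τ y := by
      intro y; rw [mulswap_apply, hτa, hτx]
    refine ⟨⟨?_, ?_⟩, ?_⟩
    · rw [invol_iff]
      intro y
      rw [happ, happ]
      by_cases hy : y = a
      · simp [hy, hxa, Ne.symm hxa]
      by_cases hy2 : y = x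
      · simp [hy, hy2]
      · have g1 : τ y ≠ a := fun hc => hy (by rw [← invol_apply h1 y, hc, hτa])
        have g2 : τ y ≠ x := fun hc => hy2 (by rw [← invol_apply h1 y, hc, hτx])
        simp [hy, hy2, g1, g2, invol_apply h1]
    · intro i hi
      have g0 : i ≠ a := fun hc => (hc ▸ hi) ha
      have g1 : i ≠ x := fun hc => (hc ▸ hi) hxs
      rw [happ]
      simp only [g0, g1, if_false]
      exact h2 i (by simp [hi])
    · rw [happ]; simpa using hxa
  · rintro π hπ
    simp only
    rw [mul_assoc, swap_mul_self, mul_one]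
  · rintro ⟨x, τ⟩ hp
    simp only [mem_sigma, mem_erase] at hp
    obtain ⟨⟨hxa, hxs⟩, hτ⟩ := hp
    rw [mem_Inn] at hτ
    obtain ⟨h1, h2⟩ := hτ
    have happx : (τ * swap a x) a = x := by
      rw [mulswap_apply]; simp [h2 x (by simp)]
    refine Sigma.ext happx (heq_of_eq ?_)
    simp only
    rw [happx, mul_assoc, swap_mul_self, mul_one]
  · intro π hπ
    simp only
    rw [mul_assoc, swap_mul_self, mul_one]

-- chunk 2
lemma Inn_filter_fix {s : Finset (Fin N)} {a : Fin N} (ha : a ∈ s) :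
    (Inn s).filter (fun π => π a = a) = Inn (s.erase a) := by
  ext π
  simp only [mem_filter, mem_Inn, mem_erase]
  constructor
  · rintro ⟨⟨h1, h2⟩, h3⟩
    refine ⟨h1, fun i hi => ?_⟩
    by_cases hia : i = a
    · rw [hia]; exact h3
    · exact h2 i (fun hc => hi ⟨hia, hc⟩)
  · rintro ⟨h1, h2⟩
    have h3 : π a = a := h2 a (by simp)
    exact ⟨⟨h1, fun i hi => h2 i (fun hc => hi hc.2)⟩, h3⟩

lemma fp_card {t : Finset (Fin N)} {π : Perm (Fin N)} (hπ : π ∈ Inn t) :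
    (t.filter fun i => π i ≠ i).card = 2 * jj π := by
  rw [mem_Inn] at hπ
  obtain ⟨h1, h2⟩ := hπ
  have e1 : (t.filter fun i => π i ≠ i) = univ.filter fun i => π i ≠ i := by
    ext i
    simp only [mem_filter, mem_univ, true_and]
    exact ⟨fun h => h.2, fun h => ⟨by by_contra hc; exact h (h2 i hc), h⟩⟩
  rw [e1]
  have e2 : (univ.filter fun i => π i ≠ i)
      = (univ.filter fun i => i < π i) ∪ (univ.filter fun i => π i < i) := by
    ext i
    simp only [mem_filter, mem_univ, true_and, mem_union]
    constructor
    · intro h; rcases lt_or_gt_of_ne h with h' | h'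
      · exact Or.inr h'
      · exact Or.inl h'
    · rintro (h | h)
      · exact (ne_of_gt h)
      · exact (ne_of_lt h)
  rw [e2, card_union_of_disjoint, two_mul, jj]
  · congr 1
    refine Finset.card_nbij' (i := fun i => π i) (j := fun i => π i) ?_ ?_ ?_ ?_
    · intro i hi
      simp only [mem_coe, mem_filter, mem_univ, true_and] at hi ⊢
      rw [invol_apply h1]; exact hi
    · intro i hi
      simp only [mem_coe, mem_filter, mem_univ, true_and] at hi ⊢
      rw [invol_apply h1]; exact hi
    · intro i _; exact invol_apply h1 i
    · intro i _; exact invol_apply h1 i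
  · rw [Finset.disjoint_filter]
    intro i _ hl hg
    exact absurd (hg.trans hl) (lt_irrefl _)

lemma filter_mulswap {a x : Fin N} (τ : Perm (Fin N)) (hax : a < x)
    (hτa : τ a = a) (hτx : τ x = x) :
    (univ.filter fun i => i < (τ * swap a x) i) = insert a (univ.filter fun i => i < τ i) := by
  ext i
  simp only [mem_filter, mem_univ, true_and, mem_insert, mulswap_apply]
  by_cases h1 : i = a
  · simp [h1, hτx, hax]
  by_cases h2 : i = x
  · subst h2
    simp [h1, hτa, hτx, not_lt.mpr hax.le, Ne.symm h1]
  · simp [h1, h2]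

-- chunk 3
lemma Inn_empty : Inn (∅ : Finset (Fin N)) = {1} := by
  ext π
  simp only [mem_Inn, mem_singleton, notMem_empty, not_false_iff, true_implies]
  constructor
  · rintro ⟨_, h2⟩; ext i; simp [h2 i]
  · rintro rfl; simp

lemma P_mulswap {s : Finset (Fin N)} {a x : Fin N} (hax : x ≠ a) (hx : x ∈ s) (ha : a ∈ s)
    {τ : Perm (Fin N)} (hτ : τ ∈ Inn ((s.erase a).erase x)) :
    (∀ i ∈ s, (τ * swap a x) i ≠ i) ↔ (∀ i ∈ (s.erase a).erase x, τ i ≠ i) := by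
  rw [mem_Inn] at hτ
  obtain ⟨h1, h2⟩ := hτ
  have hτa : τ a = a := h2 a (by simp)
  have hτx : τ x = x := h2 x (by simp)
  constructor
  · intro h i hi
    rw [mem_erase, mem_erase] at hi
    obtain ⟨hix, hia, his⟩ := hi
    have := h i his
    rwa [mulswap_apply, if_neg hia, if_neg hix] at this
  · intro h i his
    rw [mulswap_apply]
    by_cases hia : i = a
    · simp [hia, hτx, hax]
    by_cases hix : i = x
    · simp [hia, hix, hτa, hax, Ne.symm hax]
    · simp only [hia, hix, if_false]
      exact h i (by simp [hix, hia, his])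

lemma prod_mulswap {R : Type*} [CommRing R] {a x : Fin N} (hax : a < x) {τ : Perm (Fin N)}
    (hτa : τ a = a) (hτx : τ x = x) (g : Fin N → Fin N → R) :
    ∏ i ∈ univ.filter (fun i => i < (τ * swap a x) i), g i ((τ * swap a x) i)
      = g a x * ∏ i ∈ univ.filter (fun i => i < τ i), g i (τ i) := by
  rw [filter_mulswap τ hax hτa hτx, prod_insert (by simp [hτa])]
  have hva : (τ * swap a x) a = x := by rw [mulswap_apply]; simp [hτx]
  rw [hva]
  congr 1
  refine prod_congr rfl (fun i hi => ?_)
  simp only [mem_filter, mem_univ, true_and] at hi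
  have hia : i ≠ a := fun hc => by rw [hc, hτa] at hi; exact lt_irrefl _ hi
  have hix : i ≠ x := fun hc => by rw [hc, hτx] at hi; exact lt_irrefl _ hi
  rw [mulswap_apply, if_neg hia, if_neg hix]

lemma jj_mulswap {a x : Fin N} (hax : a < x) {τ : Perm (Fin N)}
    (hτa : τ a = a) (hτx : τ x = x) :
    jj (τ * swap a x) = jj τ + 1 := by
  rw [jj, jj, filter_mulswap τ hax hτa hτx, card_insert_of_notMem (by simp [hτa])]

lemma main_lemma {R : Type*} [CommRing R] (b : R) (e : Fin N → Fin N → R) (r : ℕ) :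
    ∀ s : Finset (Fin N), s.card = 2 * r →
      ∑ σ ∈ (Inn s).filter (fun π => ∀ i ∈ s, π i ≠ i),
          ∏ i ∈ univ.filter (fun i => i < σ i), (b + e i (σ i))
        = ∑ π ∈ Inn s, (∏ i ∈ univ.filter (fun i => i < π i), e i (π i))
            * (df (r - jj π) : R) * b ^ (r - jj π) := by
  induction r with
  | zero =>
    intro s hs
    have : s = ∅ := card_eq_zero.mp (by omega)
    subst this
    rw [Inn_empty]
    have hf : (univ.filter fun i => i < (1 : Perm (Fin N)) i) = ∅ := by
      ext i; simp
    have hjj : jj (1 : Perm (Fin N)) = 0 := by rw [jj, hf]; simp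
    rw [filter_singleton]
    simp [hf, hjj, df]
  | succ r IH =>
    intro s hs
    have hne : s.Nonempty := card_pos.mp (by omega)
    set a := s.min' hne with hadef
    have ha : a ∈ s := s.min'_mem hne
    have halt : ∀ x ∈ s.erase a, a < x := fun x hx =>
      lt_of_le_of_ne (s.min'_le x (mem_of_mem_erase hx)) (Ne.symm (ne_of_mem_erase hx))
    -- facts about τ in inner sums
    have hτfix : ∀ x ∈ s.erase a, ∀ τ ∈ Inn ((s.erase a).erase x), τ a = a ∧ τ x = x := by
      intro x hx τ hτ
      rw [mem_Inn] at hτ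
      exact ⟨hτ.2 a (by simp), hτ.2 x (by simp)⟩
    have hcard'' : ∀ x ∈ s.erase a, ((s.erase a).erase x).card = 2 * r := by
      intro x hx
      rw [card_erase_of_mem hx, card_erase_of_mem ha, hs]
      omega
    -- LHS expansion
    have lhs_eq : ∑ σ ∈ (Inn s).filter (fun π => ∀ i ∈ s, π i ≠ i),
          ∏ i ∈ univ.filter (fun i => i < σ i), (b + e i (σ i))
        = ∑ x ∈ s.erase a, (b + e a x) *
            ∑ τ ∈ (Inn ((s.erase a).erase x)).filter
              (fun π => ∀ i ∈ (s.erase a).erase x, π i ≠ i),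
              ∏ i ∈ univ.filter (fun i => i < τ i), (b + e i (τ i)) := by
      have step1 : ∑ σ ∈ (Inn s).filter (fun π => ∀ i ∈ s, π i ≠ i),
            ∏ i ∈ univ.filter (fun i => i < σ i), (b + e i (σ i))
          = ∑ π ∈ (Inn s).filter (fun π => π a ≠ a),
              (if ∀ i ∈ s, π i ≠ i then
                ∏ i ∈ univ.filter (fun i => i < π i), (b + e i (π i)) else 0) := by
        rw [sum_filter]
        rw [← sum_filter_add_sum_filter_not (Inn s) (fun π => π a ≠ a)]
        have : ∑ π ∈ (Inn s).filter (fun π => ¬ π a ≠ a),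
            (if ∀ i ∈ s, π i ≠ i then
              ∏ i ∈ univ.filter (fun i => i < π i), (b + e i (π i)) else 0) = 0 := by
          refine sum_eq_zero (fun π hπ => ?_)
          rw [mem_filter, not_ne_iff] at hπ
          rw [if_neg]
          intro hc
          exact hc a ha hπ.2
        rw [this, add_zero]
      rw [step1, L1 s a ha]
      refine sum_congr rfl (fun x hx => ?_)
      rw [mul_sum, sum_filter]
      refine sum_congr rfl (fun τ hτ => ?_)
      obtain ⟨hfa, hfx⟩ := hτfix x hx τ hτ
      have hPQ := P_mulswap (ne_of_mem_erase hx) (mem_of_mem_erase hx) ha hτ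
      by_cases hQ : ∀ i ∈ (s.erase a).erase x, τ i ≠ i
      · rw [if_pos (hPQ.mpr hQ), if_pos hQ, prod_mulswap (halt x hx) hfa hfx (fun i j => b + e i j)]
      · rw [if_neg (fun hc => hQ (hPQ.mp hc)), if_neg hQ]
    rw [lhs_eq]
    -- apply IH
    have lhs_eq2 : ∑ x ∈ s.erase a, (b + e a x) *
            ∑ τ ∈ (Inn ((s.erase a).erase x)).filter
              (fun π => ∀ i ∈ (s.erase a).erase x, π i ≠ i),
              ∏ i ∈ univ.filter (fun i => i < τ i), (b + e i (τ i))
        = ∑ x ∈ s.erase a, (b + e a x) *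
            ∑ τ ∈ Inn ((s.erase a).erase x),
              (∏ i ∈ univ.filter (fun i => i < τ i), e i (τ i))
                * (df (r - jj τ) : R) * b ^ (r - jj τ) := by
      refine sum_congr rfl (fun x hx => ?_)
      rw [IH _ (hcard'' x hx)]
    rw [lhs_eq2]
    -- RHS split
    have rhs_split : ∑ π ∈ Inn s, (∏ i ∈ univ.filter (fun i => i < π i), e i (π i))
            * (df (r + 1 - jj π) : R) * b ^ (r + 1 - jj π)
        = (∑ π ∈ Inn (s.erase a), (∏ i ∈ univ.filter (fun i => i < π i), e i (π i))
            * (df (r + 1 - jj π) : R) * b ^ (r + 1 - jj π))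
          + ∑ x ∈ s.erase a, ∑ τ ∈ Inn ((s.erase a).erase x),
              e a x * ((∏ i ∈ univ.filter (fun i => i < τ i), e i (τ i))
                * (df (r - jj τ) : R) * b ^ (r - jj τ)) := by
      rw [← sum_filter_add_sum_filter_not (Inn s) (fun π => π a = a)]
      congr 1
      · rw [Inn_filter_fix ha]
      · rw [show (Inn s).filter (fun π => ¬ π a = a) = (Inn s).filter (fun π => π a ≠ a) from rfl]
        rw [L1 s a ha]
        refine sum_congr rfl (fun x hx => sum_congr rfl (fun τ hτ => ?_))
        obtain ⟨hfa, hfx⟩ := hτfix x hx τ hτ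
        rw [prod_mulswap (halt x hx) hfa hfx e, jj_mulswap (halt x hx) hfa hfx]
        have hσ : r + 1 - (jj τ + 1) = r - jj τ := by omega
        rw [hσ]
        ring
    rw [rhs_split]
    -- match the two pieces
    have piece_match : ∑ x ∈ s.erase a, (b + e a x) *
            ∑ τ ∈ Inn ((s.erase a).erase x),
              (∏ i ∈ univ.filter (fun i => i < τ i), e i (τ i))
                * (df (r - jj τ) : R) * b ^ (r - jj τ)
        = (∑ x ∈ s.erase a, b * ∑ τ ∈ Inn ((s.erase a).erase x),
              (∏ i ∈ univ.filter (fun i => i < τ i), e i (τ i))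
                * (df (r - jj τ) : R) * b ^ (r - jj τ))
          + ∑ x ∈ s.erase a, ∑ τ ∈ Inn ((s.erase a).erase x),
              e a x * ((∏ i ∈ univ.filter (fun i => i < τ i), e i (τ i))
                * (df (r - jj τ) : R) * b ^ (r - jj τ)) := by
      rw [← sum_add_distrib]
      refine sum_congr rfl (fun x hx => ?_)
      rw [add_mul]
      congr 1
      exact mul_sum _ _ _
    rw [piece_match]
    -- the b-part: double counting over fixed points
    have swapset : ∀ x ∈ s.erase a, Inn ((s.erase a).erase x)
        = (Inn (s.erase a)).filter (fun τ => τ x = x) := by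
      intro x hx
      rw [Inn_filter_fix hx]
    have sum_b : ∑ x ∈ s.erase a, b * ∑ τ ∈ Inn ((s.erase a).erase x),
              (∏ i ∈ univ.filter (fun i => i < τ i), e i (τ i))
                * (df (r - jj τ) : R) * b ^ (r - jj τ)
        = ∑ τ ∈ Inn (s.erase a), (((s.erase a).filter (fun x => τ x = x)).card : R) *
              (b * ((∏ i ∈ univ.filter (fun i => i < τ i), e i (τ i))
                * (df (r - jj τ) : R) * b ^ (r - jj τ))) := by
      have : ∀ x ∈ s.erase a, b * ∑ τ ∈ Inn ((s.erase a).erase x),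
              (∏ i ∈ univ.filter (fun i => i < τ i), e i (τ i))
                * (df (r - jj τ) : R) * b ^ (r - jj τ)
          = ∑ τ ∈ Inn (s.erase a), (if τ x = x then
              b * ((∏ i ∈ univ.filter (fun i => i < τ i), e i (τ i))
                * (df (r - jj τ) : R) * b ^ (r - jj τ)) else 0) := by
        intro x hx
        rw [swapset x hx, mul_sum, sum_filter]
      rw [sum_congr rfl this, Finset.sum_comm]
      refine sum_congr rfl (fun τ hτ => ?_)
      rw [← sum_filter, sum_const, nsmul_eq_mul]
    rw [sum_b]
    congr 1
    refine sum_congr rfl (fun τ hτ => ?_)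
    have hfp : ((s.erase a).filter (fun x => ¬ τ x = x)).card = 2 * jj τ := fp_card hτ
    have hcards : ((s.erase a).filter (fun x => τ x = x)).card
        + ((s.erase a).filter (fun x => ¬ τ x = x)).card = 2 * r + 1 := by
      rw [card_filter_add_card_filter_not, card_erase_of_mem ha, hs]
      omega
    have hjle : jj τ ≤ r := by omega
    have hfix : ((s.erase a).filter (fun x => τ x = x)).card = 2 * (r - jj τ) + 1 := by omega
    have hd : r + 1 - jj τ = (r - jj τ) + 1 := by omega
    rw [hfix, hd, show df ((r - jj τ) + 1) = (2 * (r - jj τ) + 1) * df (r - jj τ) from rfl]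
    push_cast
    ring

def NCset (n j : ℕ) : Finset (Finset ℕ) :=
  ((range n).powerset).filter (fun T => T.card = j ∧ ∀ t ∈ T, t + 1 ∉ T)

lemma mem_NCset {n j : ℕ} {T : Finset ℕ} :
    T ∈ NCset n j ↔ T ⊆ range n ∧ T.card = j ∧ ∀ t ∈ T, t + 1 ∉ T := by
  simp [NCset, and_assoc]

lemma NCset_zero (n : ℕ) : NCset n 0 = {∅} := by
  ext T
  simp only [mem_NCset, mem_singleton, card_eq_zero]
  constructor
  · rintro ⟨_, h, _⟩; exact h
  · rintro rfl; simp

lemma NCset_nil (j : ℕ) : NCset 0 (j + 1) = ∅ := by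
  ext T
  simp only [mem_NCset, notMem_empty, iff_false, range_zero, subset_empty]
  rintro ⟨rfl, h, _⟩
  simp at h

lemma NCset_one (j : ℕ) : NCset 1 (j + 1) = if j = 0 then {{0}} else ∅ := by
  by_cases hj : j = 0
  · subst hj; rw [if_pos rfl]
    ext T
    simp only [mem_NCset, mem_singleton]
    constructor
    · rintro ⟨hsub, hcard, _⟩
      rcases Finset.subset_singleton_iff.mp (by simpa [range_one] using hsub) with rfl | rfl
      · simp at hcard
      · rfl
    · rintro rfl
      exact ⟨by simp [range_one], by simp, by simp⟩
  · rw [if_neg hj]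
    ext T
    simp only [mem_NCset, notMem_empty, iff_false, not_and]
    intro hsub hcard
    rcases Finset.subset_singleton_iff.mp (by simpa [range_one] using hsub) with rfl | rfl
    · simp at hcard
    · exfalso; simp only [card_singleton] at hcard; omega

lemma NCset_rec (n j : ℕ) :
    (NCset (n + 2) (j + 1)).card = (NCset (n + 1) (j + 1)).card + (NCset n j).card := by
  rw [← card_filter_add_card_filter_not (s := NCset (n + 2) (j + 1))
      (p := fun T => n + 1 ∈ T)]
  rw [add_comm]
  congr 1
  · -- not containing n+1 : equals NCset (n+1) (j+1)
    congr 1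
    ext T
    simp only [mem_filter, mem_NCset]
    constructor
    · rintro ⟨⟨hsub, hcard, hnc⟩, hn⟩
      refine ⟨fun t ht => ?_, hcard, hnc⟩
      have := hsub ht
      rw [mem_range] at this ⊢
      rcases Nat.lt_or_ge t (n+1) with h | h
      · exact h
      · exfalso; have : t = n + 1 := by omega
        exact hn (this ▸ ht)
    · rintro ⟨hsub, hcard, hnc⟩
      have hn : n + 1 ∉ T := fun hc => by simpa using hsub hc
      exact ⟨⟨hsub.trans (by intro t; simp only [mem_range]; omega), hcard, hnc⟩, hn⟩
  · -- containing n+1 : bijection with NCset n j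
    refine Finset.card_nbij' (i := fun T => T.erase (n + 1)) (j := fun T => insert (n + 1) T)
      ?_ ?_ ?_ ?_
    · intro T hT
      rw [mem_coe, mem_filter, mem_NCset] at hT
      obtain ⟨⟨hsub, hcard, hnc⟩, hn⟩ := hT
      rw [mem_coe, mem_NCset]
      refine ⟨?_, ?_, ?_⟩
      · intro t ht
        rw [mem_erase] at ht
        obtain ⟨htne, htT⟩ := ht
        have h1 : t < n + 2 := by simpa using hsub htT
        have h2 : t ≠ n := fun hc => hnc t htT (by rw [hc]; exact hn)
        rw [mem_range]; omega
      · rw [card_erase_of_mem hn, hcard]; rfl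
      · intro t ht
        rw [mem_erase] at ht
        intro hc
        exact hnc t ht.2 (mem_of_mem_erase hc)
    · intro T hT
      rw [mem_coe, mem_NCset] at hT
      obtain ⟨hsub, hcard, hnc⟩ := hT
      have hn : n + 1 ∉ T := fun hc => by simpa using hsub hc
      rw [mem_coe, mem_filter, mem_NCset]
      refine ⟨⟨?_, ?_, ?_⟩, by simp⟩
      · intro t ht
        rw [mem_insert] at ht
        rcases ht with rfl | ht
        · simp
        · have := hsub ht; rw [mem_range] at this ⊢; omega
      · rw [card_insert_of_notMem hn, hcard]
      · intro t ht hc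
        rw [mem_insert] at ht hc
        rcases ht with rfl | ht
        · rcases hc with hc | hc
          · omega
          · have := hsub hc; simp only [mem_range] at this; omega
        · rcases hc with hc | hc
          · have := hsub ht; simp only [mem_range] at this; omega
          · exact hnc t ht hc
    · intro T hT
      rw [mem_coe, mem_filter] at hT
      exact insert_erase hT.2
    · intro T hT
      rw [mem_coe, mem_NCset] at hT
      have hn : n + 1 ∉ T := fun hc => by simpa using hT.1 hc
      exact erase_insert hn

lemma NCset_card : ∀ n j : ℕ, (NCset n j).card = (n + 1 - j).choose j := by
  intro n
  induction n using Nat.strong_induction_on with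
  | _ n IH =>
    intro j
    match n, j with
    | n, 0 => rw [NCset_zero]; simp
    | 0, (j+1) => rw [NCset_nil]; simp [Nat.choose_eq_zero_of_lt]
    | 1, (j+1) =>
      rw [NCset_one]
      rcases Nat.eq_zero_or_pos j with rfl | hj
      · simp
      · rw [if_neg (by omega)]
        rw [Nat.choose_eq_zero_of_lt (by omega)]
        simp
    | (n+2), (j+1) =>
      rw [NCset_rec, IH (n+1) (by omega) (j+1), IH n (by omega) j]
      rcases Nat.lt_or_ge j (n+2) with h | h
      · rw [show n + 2 + 1 - (j+1) = (n + 1 - j) + 1 by omega,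
            show n + 1 + 1 - (j + 1) = n + 1 - j by omega,
            Nat.choose_succ_succ']
        omega
      · rw [Nat.choose_eq_zero_of_lt (by omega), Nat.choose_eq_zero_of_lt (by omega),
            Nat.choose_eq_zero_of_lt (by omega)]

-- chunk 5
def domF (T : Finset ℕ) (i : Fin N) : Fin N :=
  if h : (i : ℕ) ∈ T ∧ (i : ℕ) + 1 < N then ⟨(i : ℕ) + 1, h.2⟩
  else if h2 : 0 < (i : ℕ) ∧ (i : ℕ) - 1 ∈ T then
    ⟨(i : ℕ) - 1, Nat.lt_of_le_of_lt (Nat.sub_le _ _) i.isLt⟩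
  else i

lemma domF_val (T : Finset ℕ) (i : Fin N) : (domF T i : ℕ) =
    if (i : ℕ) ∈ T ∧ (i : ℕ) + 1 < N then (i : ℕ) + 1
    else if 0 < (i : ℕ) ∧ (i : ℕ) - 1 ∈ T then (i : ℕ) - 1 else i := by
  unfold domF
  split_ifs <;> simp

lemma domF_invol {T : Finset ℕ} (hnc : ∀ t ∈ T, t + 1 ∉ T) (hb : ∀ t ∈ T, t + 1 < N) :
    Function.Involutive (domF (N := N) T) := by
  intro i
  by_cases h1 : (i : ℕ) ∈ T
  · have hb1 : (i : ℕ) + 1 < N := hb _ h1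
    have e1 : domF T i = ⟨(i : ℕ) + 1, hb1⟩ := Fin.ext (by rw [domF_val, if_pos ⟨h1, hb1⟩])
    rw [e1]
    apply Fin.ext
    rw [domF_val]
    simp only [Nat.add_sub_cancel]
    rw [if_neg (fun hc => hnc _ h1 hc.1), if_pos ⟨Nat.succ_pos _, h1⟩]
  by_cases h2 : 0 < (i : ℕ) ∧ (i : ℕ) - 1 ∈ T
  · have e1 : domF T i = ⟨(i : ℕ) - 1, Nat.lt_of_le_of_lt (Nat.sub_le _ _) i.isLt⟩ :=
      Fin.ext (by rw [domF_val, if_neg (fun hc => h1 hc.1), if_pos h2])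
    rw [e1]
    apply Fin.ext
    rw [domF_val]
    simp only
    rw [if_pos ⟨h2.2, by omega⟩]
    omega
  · have e1 : domF T i = i :=
      Fin.ext (by rw [domF_val, if_neg (fun hc => h1 hc.1), if_neg h2])
    rw [e1, e1]

def pof (T : Finset ℕ) : Perm (Fin N) :=
  if h : (∀ t ∈ T, t + 1 ∉ T) ∧ (∀ t ∈ T, t + 1 < N) then
    Function.Involutive.toPerm _ (domF_invol h.1 h.2) else 1

lemma pof_apply {T : Finset ℕ} (hnc : ∀ t ∈ T, t + 1 ∉ T) (hb : ∀ t ∈ T, t + 1 < N)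
    (i : Fin N) : pof T i = domF T i := by
  rw [pof, dif_pos ⟨hnc, hb⟩]
  rfl

/-- the set of left endpoints of a permutation -/
def vF (π : Perm (Fin N)) : Finset ℕ := (univ.filter fun i => i < π i).image Fin.val

lemma mem_vF {π : Perm (Fin N)} {t : ℕ} :
    t ∈ vF π ↔ ∃ i : Fin N, i < π i ∧ (i : ℕ) = t := by
  simp [vF]

lemma adj_val {π : Perm (Fin N)}
    (hadj : ∀ i : Fin N, i < π i → ((i : ℕ) + 1 = ((π i) : ℕ) ∨ ((π i) : ℕ) + 1 = (i : ℕ)))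
    {i : Fin N} (h : i < π i) : (i : ℕ) + 1 = ((π i) : ℕ) := by
  rcases hadj i h with h' | h'
  · exact h'
  · exfalso; rw [Fin.lt_def] at h; omega

lemma vF_nc {π : Perm (Fin N)} (h1 : π * π = 1)
    (hadj : ∀ i : Fin N, i < π i → ((i : ℕ) + 1 = ((π i) : ℕ) ∨ ((π i) : ℕ) + 1 = (i : ℕ))) :
    ∀ t ∈ vF π, t + 1 ∉ vF π := by
  intro t ht hc
  rw [mem_vF] at ht hc
  obtain ⟨i1, hi1, hv1⟩ := ht
  obtain ⟨i2, hi2, hv2⟩ := hc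
  have e1 : (i1 : ℕ) + 1 = ((π i1) : ℕ) := adj_val hadj hi1
  have e2 : π i1 = i2 := Fin.ext (by omega)
  have e3 : π i2 = i1 := by rw [← e2, invol_apply h1]
  rw [Fin.lt_def, e3] at hi2
  omega

lemma vF_bound {π : Perm (Fin N)}
    (hadj : ∀ i : Fin N, i < π i → ((i : ℕ) + 1 = ((π i) : ℕ) ∨ ((π i) : ℕ) + 1 = (i : ℕ))) :
    ∀ t ∈ vF π, t + 1 < N := by
  intro t ht
  rw [mem_vF] at ht
  obtain ⟨i, hi, hv⟩ := ht
  have e1 := adj_val hadj hi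
  have := (π i).isLt
  omega

lemma pof_filter {T : Finset ℕ} (hnc : ∀ t ∈ T, t + 1 ∉ T) (hb : ∀ t ∈ T, t + 1 < N) :
    (univ.filter fun i => i < pof T i) = (univ.filter fun i : Fin N => (i : ℕ) ∈ T) := by
  ext i
  simp only [mem_filter, mem_univ, true_and, pof_apply hnc hb]
  constructor
  · intro h
    rw [Fin.lt_def, domF_val] at h
    by_cases hT : (i : ℕ) ∈ T
    · exact hT
    · exfalso
      rw [if_neg (fun hc => hT hc.1)] at h
      split_ifs at h <;> omega
  · intro hT
    rw [Fin.lt_def, domF_val, if_pos ⟨hT, hb _ hT⟩]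
    omega

lemma count_lemma (j : ℕ) :
    ((Inn (univ : Finset (Fin N))).filter (fun π =>
      (∀ i : Fin N, i < π i → ((i : ℕ) + 1 = ((π i) : ℕ) ∨ ((π i) : ℕ) + 1 = (i : ℕ))) ∧ jj π = j)).card
    = (NCset (N - 1) j).card := by
  refine Finset.card_nbij' (i := vF) (j := pof) ?_ ?_ ?_ ?_
  · -- forward membership
    intro π hπ
    rw [mem_coe, mem_filter, mem_Inn] at hπ
    obtain ⟨⟨h1, -⟩, hadj, hjj⟩ := hπ
    rw [mem_coe, mem_NCset]
    refine ⟨?_, ?_, vF_nc h1 hadj⟩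
    · intro t ht
      have hbd := vF_bound hadj t ht
      rw [mem_range]; omega
    · rw [vF, card_image_of_injOn (fun x _ y _ h => Fin.ext h)]
      exact hjj
  · -- backward membership
    intro T hT
    rw [mem_coe, mem_NCset] at hT
    obtain ⟨hsub, hcard, hnc⟩ := hT
    have hb : ∀ t ∈ T, t + 1 < N := by
      intro t ht
      have := hsub ht
      rw [mem_range] at this
      omega
    rw [mem_coe, mem_filter, mem_Inn]
    refine ⟨⟨?_, fun i hi => absurd (mem_univ i) hi⟩, ?_, ?_⟩
    · rw [invol_iff]
      intro i
      rw [pof_apply hnc hb, pof_apply hnc hb]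
      exact domF_invol hnc hb i
    · intro i hi
      rw [pof_apply hnc hb] at hi ⊢
      rw [Fin.lt_def, domF_val] at hi
      left
      rw [domF_val]
      split_ifs at hi with hA hB
      · rw [if_pos hA]
      · omega
      · omega
    · rw [jj, pof_filter hnc hb]
      rw [hcard.symm]
      refine Finset.card_bij (fun i _ => (i : ℕ)) ?_ ?_ ?_
      · intro i hi
        simpa using (mem_filter.mp hi).2
      · intro i _ i' _ h
        exact Fin.ext h
      · intro t ht
        have htr : t < N := by
          have := hsub ht; rw [mem_range] at this; omega
        exact ⟨⟨t, htr⟩, by simpa using ht, rfl⟩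
  · -- left inverse
    intro π hπ
    rw [mem_coe, mem_filter, mem_Inn] at hπ
    obtain ⟨⟨h1, -⟩, hadj, hjj⟩ := hπ
    have hnc := vF_nc h1 hadj
    have hb := vF_bound hadj
    ext i
    rw [pof_apply hnc hb]
    rcases lt_trichotomy i (π i) with hlt | heq | hgt
    · have e1 := adj_val hadj hlt
      have hmem : (i : ℕ) ∈ vF π := mem_vF.mpr ⟨i, hlt, rfl⟩
      rw [domF_val, if_pos ⟨hmem, by omega⟩]
      omega
    · have hmem : (i : ℕ) ∉ vF π := by
        rw [mem_vF]
        rintro ⟨i0, hi0, hv0⟩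
        have : i0 = i := Fin.ext hv0
        rw [this] at hi0
        exact absurd heq.symm (ne_of_lt hi0).symm
      have hmem2 : ¬(0 < (i : ℕ) ∧ (i : ℕ) - 1 ∈ vF π) := by
        rintro ⟨hpos, hc⟩
        rw [mem_vF] at hc
        obtain ⟨i0, hi0, hv0⟩ := hc
        have e0 := adj_val hadj hi0
        have e2 : π i0 = i := Fin.ext (by omega)
        have e3 : π i = i0 := by rw [← e2, invol_apply h1]
        rw [← heq] at e3
        have : (i0 : ℕ) = (i : ℕ) := congrArg Fin.val e3.symm
        omega
      rw [domF_val, if_neg (fun hc => hmem hc.1), if_neg hmem2]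
      exact congrArg Fin.val heq
    · have hk : π (π i) = i := invol_apply h1 i
      have hklt : π i < π (π i) := by rw [hk]; exact hgt
      have e1 := adj_val hadj hklt
      rw [hk] at e1
      have hmemk : ((π i : ℕ)) ∈ vF π := mem_vF.mpr ⟨π i, hklt, rfl⟩
      have hmem : (i : ℕ) ∉ vF π := by
        rw [mem_vF]
        rintro ⟨i0, hi0, hv0⟩
        have : i0 = i := Fin.ext hv0
        rw [this] at hi0
        exact absurd (hi0.trans hgt) (lt_irrefl i)
      rw [domF_val, if_neg (fun hc => hmem hc.1),
        if_pos ⟨by omega, by rw [show (i : ℕ) - 1 = ((π i : ℕ)) by omega]; exact hmemk⟩]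
      omega
  · -- right inverse
    intro T hT
    rw [mem_coe, mem_NCset] at hT
    obtain ⟨hsub, hcard, hnc⟩ := hT
    have hb : ∀ t ∈ T, t + 1 < N := by
      intro t ht
      have := hsub ht
      rw [mem_range] at this
      omega
    rw [vF, pof_filter hnc hb]
    ext t
    simp only [mem_image, mem_filter, mem_univ, true_and]
    constructor
    · rintro ⟨i, hi, rfl⟩; exact hi
    · intro ht
      have htr : t < N := by
        have := hsub ht; rw [mem_range] at this; omega
      exact ⟨⟨t, htr⟩, by simpa using ht, rfl⟩

-- final assembly (appended to g.lean for testing)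
lemma df_fact : ∀ k : ℕ, df k * (2 ^ k * k.factorial) = (2 * k).factorial := by
  intro k
  induction k with
  | zero => simp [df]
  | succ k IH =>
    have hdf : df (k + 1) = (2 * k + 1) * df k := rfl
    have hfac : (2 * (k + 1)).factorial = (2 * k + 2) * ((2 * k + 1) * (2 * k).factorial) := by
      rw [show 2 * (k + 1) = (2 * k + 1) + 1 by ring, Nat.factorial_succ, Nat.factorial_succ]
    rw [hdf, hfac, ← IH, pow_succ, Nat.factorial_succ]
    ring

lemma coeff_eq (m k : ℕ) (hk : k ≤ m) :
    (m + k).factorial / (k.factorial * (m - k).factorial * 2 ^ k)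
      = (m + k).choose (m - k) * df k := by
  have h2k : 2 * k ≤ m + k := by omega
  have hsymm : (m + k).choose (m - k) = (m + k).choose (2 * k) := by
    rw [show m - k = (m + k) - 2 * k by omega]
    exact Nat.choose_symm h2k
  have hfac : (m + k).choose (2 * k) * (2 * k).factorial * ((m + k) - 2 * k).factorial
      = (m + k).factorial := Nat.choose_mul_factorial_mul_factorial h2k
  rw [show (m + k) - 2 * k = m - k by omega] at hfac
  apply Nat.div_eq_of_eq_mul_left
  · have := k.factorial_pos
    have := (m - k).factorial_pos
    positivity
  · rw [hsymm, ← hfac, ← df_fact k]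
    ring

/-- For a commutative ring `R`, `b ∈ R` and `m ≥ 1`, the hafnian of the
`2m × 2m` Toeplitz matrix `T_{b+1,b}` equals the value `y_m(b)` of the Bessel
polynomial of degree `m` at `b`. -/
theorem hafnian_toeplitz_eq_bessel {R : Type*} [CommRing R] (m : ℕ) (hm : 0 < m) (b : R) :
    hafnian (toeplitzAB (2 * m) (b + 1) b) = besselPoly m b := by
  set e : Fin (2 * m) → Fin (2 * m) → R :=
    fun i j => if (i : ℕ) + 1 = (j : ℕ) ∨ (j : ℕ) + 1 = (i : ℕ) then 1 else 0 with he
  have step1 : hafnian (toeplitzAB (2 * m) (b + 1) b)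
      = ∑ σ ∈ (Inn (Finset.univ : Finset (Fin (2 * m)))).filter
          (fun π => ∀ i ∈ Finset.univ, π i ≠ i),
          ∏ i ∈ univ.filter (fun i => i < σ i), (b + e i (σ i)) := by
    rw [hafnian]
    refine Finset.sum_congr ?_ (fun σ hσ => prod_congr rfl (fun i hi => ?_))
    · ext π
      simp [Inn]
    have hlt : i < σ i := (mem_filter.mp hi).2
    have hne : i ≠ σ i := ne_of_lt hlt
    simp only [toeplitzAB, he, if_neg hne]
    by_cases hadj : (i : ℕ) + 1 = ((σ i) : ℕ) ∨ ((σ i) : ℕ) + 1 = (i : ℕ)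
    · rw [if_pos hadj, if_pos hadj]
    · rw [if_neg hadj, if_neg hadj, add_zero]
  have hcardu : (Finset.univ : Finset (Fin (2 * m))).card = 2 * m := by simp
  rw [step1, main_lemma b e m Finset.univ hcardu]
  -- boole / filter by adjacency
  have step3 : ∑ π ∈ Inn (Finset.univ : Finset (Fin (2 * m))),
        (∏ i ∈ univ.filter (fun i => i < π i), e i (π i))
          * (df (m - jj π) : R) * b ^ (m - jj π)
      = ∑ π ∈ (Inn (Finset.univ : Finset (Fin (2 * m)))).filter (fun π =>
          ∀ i : Fin (2 * m), i < π i →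
            ((i : ℕ) + 1 = ((π i) : ℕ) ∨ ((π i) : ℕ) + 1 = (i : ℕ))),
          (df (m - jj π) : R) * b ^ (m - jj π) := by
    rw [sum_filter]
    refine sum_congr rfl (fun π hπ => ?_)
    rw [he]
    rw [Finset.prod_boole]
    by_cases hC2 : ∀ i ∈ (univ.filter (fun i => i < π i)),
        ((i : ℕ) + 1 = ((π i) : ℕ) ∨ ((π i) : ℕ) + 1 = (i : ℕ))
    · rw [if_pos hC2, one_mul,
        if_pos (fun i hi => hC2 i (mem_filter.mpr ⟨mem_univ i, hi⟩))]
    · rw [if_neg hC2, zero_mul, zero_mul,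
        if_neg (fun hc => hC2 (fun i hi => hc i (mem_filter.mp hi).2))]
  rw [step3]
  -- fiberwise over jj
  have hmap : ∀ π ∈ (Inn (Finset.univ : Finset (Fin (2 * m)))).filter (fun π =>
          ∀ i : Fin (2 * m), i < π i →
            ((i : ℕ) + 1 = ((π i) : ℕ) ∨ ((π i) : ℕ) + 1 = (i : ℕ))),
      jj π ∈ range (m + 1) := by
    intro π hπ
    have hIn := (mem_filter.mp hπ).1
    have h2jj := fp_card hIn
    have hle : ((Finset.univ : Finset (Fin (2 * m))).filter fun i => π i ≠ i).card
        ≤ 2 * m := le_trans (card_filter_le _ _) (le_of_eq hcardu)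
    rw [mem_range]
    omega
  rw [← Finset.sum_fiberwise_of_maps_to hmap (fun π => (df (m - jj π) : R) * b ^ (m - jj π))]
  have step4 : ∀ j ∈ range (m + 1),
      ∑ π ∈ ((Inn (Finset.univ : Finset (Fin (2 * m)))).filter (fun π =>
          ∀ i : Fin (2 * m), i < π i →
            ((i : ℕ) + 1 = ((π i) : ℕ) ∨ ((π i) : ℕ) + 1 = (i : ℕ)))).filter
            (fun π => jj π = j),
          (df (m - jj π) : R) * b ^ (m - jj π)
      = ((2 * m - j).choose j : R) * ((df (m - j) : R) * b ^ (m - j)) := by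
    intro j hj
    have hterm : ∀ π ∈ ((Inn (Finset.univ : Finset (Fin (2 * m)))).filter (fun π =>
          ∀ i : Fin (2 * m), i < π i →
            ((i : ℕ) + 1 = ((π i) : ℕ) ∨ ((π i) : ℕ) + 1 = (i : ℕ)))).filter
            (fun π => jj π = j),
        (df (m - jj π) : R) * b ^ (m - jj π) = (df (m - j) : R) * b ^ (m - j) := by
      intro π hπ
      rw [(mem_filter.mp hπ).2]
    rw [sum_congr rfl hterm, sum_const, nsmul_eq_mul]
    congr 2
    rw [filter_filter]
    rw [count_lemma j, NCset_card]
    congr 1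
    omega
  rw [sum_congr rfl step4]
  -- reflect and match coefficients
  rw [← Finset.sum_range_reflect]
  rw [besselPoly]
  refine sum_congr rfl (fun k hk => ?_)
  rw [mem_range] at hk
  have hkm : k ≤ m := by omega
  rw [show m + 1 - 1 - k = m - k by omega, show 2 * m - (m - k) = m + k by omega,
    show m - (m - k) = k by omega, coeff_eq m k hkm]
  push_cast
  ring
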